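/- arXiv:1601.02356 — 2 statements merged into one kernel-verified Lean document; each statement's English description precedes it below -/
import Mathlib

section
/- Let N : g → g be a Nijenhuis operator on an n-Lie algebra (g, [·,…,·]) over a field K. Then for all x₁,…,xₙ ∈ g and all positive integers α₁,…,αₙ: Σ_{p=0}^{n} Σ_σ (−1)^{p(p−1)/2 + Σ_{j=1}^{p} σ(j)} N^{α_{σ(1)} + ⋯ + α_{σ(p)}} [x_{σ(1)},…,x_{σ(p)}, N^{α_{σ(p+1)}} x_{σ(p+1)},…, N^{α_{σ(n)}} x_{σ(n)}] = 0, where the inner sum is over all (p, n−p)-unshuffles σ of {1,…,n}. Moreover, if N is invertible, this identity holds for arbitrary integers α₁,…,αₙ ∈ ℤ (with N^α for α < 0 denoting the corresponding power of the inverse). -/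
open Finset

section Helpers

lemma filter_lt_eq_image (m p : ℕ) (hp : p ≤ m) :
    Finset.univ.filter (fun j : Fin m => (j : ℕ) < p) =
      Finset.image (Fin.castLE hp) Finset.univ := by
  ext j
  simp only [mem_filter, mem_univ, true_and, mem_image]
  constructor
  · intro hj; exact ⟨⟨j, hj⟩, Fin.ext rfl⟩
  · rintro ⟨i, rfl⟩; exact i.2

lemma card_filter_lt (m p : ℕ) (hp : p ≤ m) :
    (Finset.univ.filter (fun j : Fin m => (j : ℕ) < p)).card = p := by
  rw [filter_lt_eq_image m p hp,
    Finset.card_image_of_injective _ (Fin.castLE_injective hp)]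
  simp

lemma sum_filter_lt {M : Type*} [AddCommMonoid M] (m p : ℕ) (hp : p ≤ m)
    (f : Fin m → M) :
    ∑ j ∈ Finset.univ.filter (fun j : Fin m => (j : ℕ) < p), f j
      = ∑ i : Fin p, f (Fin.castLE hp i) := by
  rw [filter_lt_eq_image m p hp, Finset.sum_image]
  intro a _ b _ h
  exact Fin.castLE_injective hp h

lemma neg_one_sq_pow (k : ℕ) : ((-1 : ℤˣ)) ^ k * ((-1 : ℤˣ)) ^ k = 1 := by
  rw [← pow_add, ← two_mul, pow_mul]
  norm_num

/-- `Fin.cycleRange a` is strictly monotone on values distinct from `a`. -/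
lemma cycleRange_lt_cycleRange {m : ℕ} {a w₁ w₂ : Fin (m+1)} (h : w₁ < w₂)
    (h1 : w₁ ≠ a) (h2 : w₂ ≠ a) :
    Fin.cycleRange a w₁ < Fin.cycleRange a w₂ := by
  rcases lt_or_gt_of_ne h1 with c1 | c1
  · rcases lt_or_gt_of_ne h2 with c2 | c2
    · rw [Fin.cycleRange_of_lt c1, Fin.cycleRange_of_lt c2]
      rw [Fin.lt_iff_val_lt_val, Fin.val_add_one_of_lt (lt_of_lt_of_le c1 a.le_last),
        Fin.val_add_one_of_lt (lt_of_lt_of_le c2 a.le_last)]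
      exact Nat.succ_lt_succ h
    · rw [Fin.cycleRange_of_lt c1, Fin.cycleRange_of_gt c2]
      rw [Fin.lt_iff_val_lt_val, Fin.val_add_one_of_lt (lt_of_lt_of_le c1 a.le_last)]
      have hc1 : (w₁:ℕ) < (a:ℕ) := c1
      have hc2 : (a:ℕ) < (w₂:ℕ) := c2
      omega
  · have c2 : a < w₂ := lt_trans c1 h
    rw [Fin.cycleRange_of_gt c1, Fin.cycleRange_of_gt c2]
    exact h

lemma unshuffle_sign :
    ∀ (m p : ℕ), p ≤ m → ∀ σ : Equiv.Perm (Fin m),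
    (∀ i j : Fin m, i < j → ((j : ℕ) < p ∨ p ≤ (i : ℕ)) → σ i < σ j) →
    Equiv.Perm.sign σ = (-1) ^ (p * (p - 1) / 2 +
      ∑ j ∈ Finset.univ.filter (fun j : Fin m => (j : ℕ) < p), (σ j : ℕ)) := by
  intro m
  induction m with
  | zero =>
    intro p hp σ _
    interval_cases p
    have : σ = 1 := by ext i; exact i.elim0
    subst this
    simp
  | succ l IH =>
    intro p hp σ hσ
    match p, hp with
    | 0, _ =>
      have hmono : StrictMono ⇑σ := fun i j h => hσ i j h (Or.inr (Nat.zero_le _))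
      have inst : WellFoundedLT (Fin (l+1)) := inferInstance
      have hmono' : StrictMono ⇑σ.symm := by
        intro i j hij
        rcases lt_trichotomy (σ.symm i) (σ.symm j) with c | c | c
        · exact c
        · exfalso
          have : i = j := by
            have := congrArg σ c; simpa using this
          exact absurd this (ne_of_lt hij)
        · exfalso
          have := hmono c
          simp only [Equiv.apply_symm_apply] at this
          exact absurd hij (not_lt_of_gt this)
      have hid : σ = 1 := by
        ext i
        have h1 : i ≤ σ i := @StrictMono.le_apply (Fin (l+1)) _ inst ⇑σ hmono i
        have h2 : i ≤ σ.symm i := @StrictMono.le_apply (Fin (l+1)) _ inst ⇑σ.symm hmono' i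
        have h3 : σ i ≤ σ (σ.symm i) := hmono.monotone h2
        simp only [Equiv.apply_symm_apply] at h3
        exact le_antisymm h3 h1
      subst hid
      simp
    | (q+1), hp =>
      have hq : q ≤ l := Nat.lt_succ_iff.mp hp
      set a : Fin (l+1) := σ 0 with ha
      set σ' : Equiv.Perm (Fin (l+1)) := (Fin.cycleRange a) * σ with hσ'def
      have hσ'app : ∀ j, σ' j = Fin.cycleRange a (σ j) := fun j => rfl
      have hσ'0 : σ' 0 = 0 := by rw [hσ'app, Fin.cycleRange_self]
      have hσ'uns : ∀ i j : Fin (l+1), i < j → ((j : ℕ) < q+1 ∨ q+1 ≤ (i : ℕ)) →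
          σ' i < σ' j := by
        intro i j hij hcond
        rcases hcond with hc | hc
        · rcases eq_or_ne i 0 with rfl | hi0
          · rw [hσ'0]
            have hj : a < σ j := hσ 0 j hij (Or.inl hc)
            rw [hσ'app, Fin.cycleRange_of_gt hj]
            exact lt_of_le_of_lt (Fin.zero_le a) hj
          · have hij' : (0 : Fin (l+1)) < i := Fin.pos_of_ne_zero hi0
            have hi : a < σ i := by
              refine hσ 0 i hij' (Or.inl ?_)
              have : (i:ℕ) < (j:ℕ) := hij
              omega
            have hj : a < σ j := hσ 0 j (lt_of_le_of_lt (Fin.zero_le i) hij) (Or.inl hc)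
            rw [hσ'app, hσ'app, Fin.cycleRange_of_gt hi, Fin.cycleRange_of_gt hj]
            exact hσ i j hij (Or.inl hc)
        · have hi0 : i ≠ 0 := by
            intro h; subst h; simp at hc
          have hj0 : j ≠ 0 := by
            intro h; subst h; exact absurd hij (by simp)
          rw [hσ'app, hσ'app]
          refine cycleRange_lt_cycleRange (hσ i j hij (Or.inr hc)) ?_ ?_
          · rw [ha]; exact fun h => hi0 (σ.injective h)
          · rw [ha]; exact fun h => hj0 (σ.injective h)
      -- decompose σ'
      set e : Equiv.Perm (Fin l) := (Equiv.Perm.decomposeFin σ').2 with he_def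
      have key : Equiv.Perm.decomposeFin.symm ((Equiv.Perm.decomposeFin σ').1, e) = σ' := by
        rw [he_def]
        exact Equiv.symm_apply_apply _ _
      have h1 : (Equiv.Perm.decomposeFin σ').1 = 0 := by
        have h := congrFun (congrArg (fun (f : Equiv.Perm (Fin (l+1))) => ⇑f) key) 0
        simp only [Equiv.Perm.decomposeFin_symm_apply_zero] at h
        exact h.trans hσ'0
      have hσ'e : ∀ x : Fin l, σ' x.succ = (e x).succ := by
        intro x
        rw [← key, Equiv.Perm.decomposeFin_symm_apply_succ, h1, Equiv.swap_self]
        rfl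
      have hsign : Equiv.Perm.sign σ' = Equiv.Perm.sign e := by
        rw [← key, Equiv.Perm.decomposeFin.symm_sign, h1, if_pos rfl, one_mul]
      -- e is an unshuffle of type (q, l - q)
      have he : ∀ i j : Fin l, i < j → ((j : ℕ) < q ∨ q ≤ (i : ℕ)) → e i < e j := by
        intro i j hij hc
        have hs : σ' i.succ < σ' j.succ := by
          refine hσ'uns _ _ (Fin.succ_lt_succ_iff.mpr hij) ?_
          rcases hc with hc | hc
          · left; rw [Fin.val_succ]; omega
          · right; rw [Fin.val_succ]; omega
        rw [hσ'e, hσ'e] at hs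
        exact Fin.succ_lt_succ_iff.mp hs
      have IHe := IH q hq e he
      -- sum bookkeeping
      have hyp : (q:ℕ) + 1 ≤ l + 1 := hp
      have hsum : ∑ j ∈ Finset.univ.filter (fun j : Fin (l+1) => (j : ℕ) < q+1), (σ j : ℕ)
          = (a : ℕ) + (∑ j ∈ Finset.univ.filter (fun j : Fin l => (j : ℕ) < q), (e j : ℕ) + q) := by
        rw [sum_filter_lt (l+1) (q+1) hp, sum_filter_lt l q hq, Fin.sum_univ_succ]
        have h0 : Fin.castLE hp (0 : Fin (q+1)) = 0 := Fin.ext rfl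
        rw [h0, ← ha]
        congr 1
        have hterm : ∀ i : Fin q, (σ (Fin.castLE hp i.succ) : ℕ)
            = (e (Fin.castLE hq i) : ℕ) + 1 := by
          intro i
          have hcast : Fin.castLE hp i.succ = (Fin.castLE hq i).succ := Fin.ext rfl
          have hgt : a < σ (Fin.castLE hp i.succ) := by
            refine hσ 0 _ ?_ (Or.inl ?_)
            · exact Fin.pos_of_ne_zero (by rw [hcast]; exact Fin.succ_ne_zero _)
            · simp only [Fin.coe_castLE, Fin.val_succ]
              omega
          have : σ (Fin.castLE hp i.succ) = σ' (Fin.castLE hp i.succ) := by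
            rw [hσ'app, Fin.cycleRange_of_gt hgt]
          rw [this, hcast, hσ'e, Fin.val_succ]
        rw [Finset.sum_congr rfl (fun i _ => hterm i), Finset.sum_add_distrib]
        simp
      have hss : Equiv.Perm.sign σ = (-1) ^ (a : ℕ) * Equiv.Perm.sign e := by
        have h2 : Equiv.Perm.sign σ' =
            Equiv.Perm.sign (Fin.cycleRange a) * Equiv.Perm.sign σ := by
          rw [hσ'def, map_mul]
        rw [Fin.sign_cycleRange] at h2
        have := congrArg (fun z => ((-1:ℤˣ) ^ (a:ℕ)) * z) h2
        rw [← mul_assoc, neg_one_sq_pow, one_mul] at this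
        rw [← this, hsign]
      have hdiv : (q+1) * (q+1-1) / 2 = q * (q-1) / 2 + q := by
        have h2 : (q+1) * q = q * (q-1) + 2 * q := by
          cases q with
          | zero => rfl
          | succ r => simp [Nat.succ_sub_one]; ring
        simp only [Nat.add_sub_cancel]
        rw [h2, Nat.add_mul_div_left _ _ (by norm_num : 0 < 2)]
      rw [hss, IHe, hsum, hdiv]
      rw [show q * (q-1) / 2 + q + ((a:ℕ) + (∑ j ∈ Finset.univ.filter
            (fun j : Fin l => (j : ℕ) < q), (e j : ℕ) + q))
          = ((a:ℕ) + (q * (q-1) / 2 + ∑ j ∈ Finset.univ.filter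
            (fun j : Fin l => (j : ℕ) < q), (e j : ℕ))) + (q + q) by ring]
      rw [pow_add, pow_add, pow_add (-1 : ℤˣ) q q, neg_one_sq_pow, mul_one]
      rw [pow_add, pow_add]

end Helpers
open Finset

/-- `b` is an `m`-multilinear skew-symmetric (alternating) map. -/
def IsSkewMultilinear (K : Type*) [Field K] {g W : Type*} [AddCommGroup g] [Module K g]
    [AddCommGroup W] [Module K W] {m : ℕ} (b : (Fin m → g) → W) : Prop :=
  (∀ (x : Fin m → g) (i : Fin m) (u v : g),
      b (Function.update x i (u + v)) = b (Function.update x i u) + b (Function.update x i v)) ∧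
  (∀ (x : Fin m → g) (i : Fin m) (c : K) (u : g),
      b (Function.update x i (c • u)) = c • b (Function.update x i u)) ∧
  (∀ (x : Fin m → g) (i j : Fin m), i ≠ j → x i = x j → b x = 0)

/-- The Filippov (fundamental) identity for an `(n+1)`-ary bracket. -/
def IsFilippov {g : Type*} [AddCommGroup g] {n : ℕ} (b : (Fin (n + 1) → g) → g) : Prop :=
  ∀ (x : Fin n → g) (y : Fin (n + 1) → g),
    b (Fin.snoc x (b y)) = ∑ i : Fin (n + 1), b (Function.update y i (b (Fin.snoc x (y i))))

/-- `b` is an `(n+1)`-Lie algebra bracket. -/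
def IsNLieBracket (K : Type*) [Field K] {g : Type*} [AddCommGroup g] [Module K g]
    {n : ℕ} (b : (Fin (n + 1) → g) → g) : Prop :=
  IsSkewMultilinear K b ∧ IsFilippov b

/-- The brackets `[x₁,…,x_m]_N^j` defined inductively from an `m`-ary bracket `b`
and a linear map `N`: `[x]_N^0 = b x` and
`[x]_N^{j+1} = ∑_{|S| = j+1} b(N applied at positions in S) − N ([x]_N^j)`. -/
def nestedBracket {K : Type*} [Field K] {g : Type*} [AddCommGroup g] [Module K g]
    {m : ℕ} (b : (Fin m → g) → g) (N : Module.End K g) : ℕ → (Fin m → g) → g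
  | 0 => b
  | j + 1 => fun x =>
      (∑ S ∈ Finset.powersetCard (j + 1) (Finset.univ : Finset (Fin m)),
          b (fun i => if i ∈ S then N (x i) else x i))
        - N (nestedBracket b N j x)

/-- `N` is a Nijenhuis operator on the `(n+1)`-Lie algebra `(g, b)`:
`[Nx₁,…,Nx_{n+1}] = N([x₁,…,x_{n+1}]_N^n)`. -/
def IsNijenhuis {K : Type*} [Field K] {g : Type*} [AddCommGroup g] [Module K g]
    {n : ℕ} (b : (Fin (n + 1) → g) → g) (N : Module.End K g) : Prop :=
  ∀ x : Fin (n + 1) → g, b (fun i => N (x i)) = N (nestedBracket b N n x)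


section Conv

variable {K : Type*} [Field K] {g : Type*} [AddCommGroup g] [Module K g] {m : ℕ}

/-- Package a skew multilinear map as an alternating map. -/
def altMapOf (b : (Fin m → g) → g) (hb : IsSkewMultilinear K b) : g [⋀^Fin m]→ₗ[K] g where
  toFun := b
  map_update_add' := by
    intro dec x i u v
    rw [Subsingleton.elim dec (instDecidableEqFin m)]
    exact hb.1 x i u v
  map_update_smul' := by
    intro dec x i c u
    rw [Subsingleton.elim dec (instDecidableEqFin m)]
    exact hb.2.1 x i c u
  map_eq_zero_of_eq' := fun v i j hv hij => hb.2.2 v i j hij hv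

lemma altMapOf_apply (b : (Fin m → g) → g) (hb : IsSkewMultilinear K b) (v : Fin m → g) :
    altMapOf b hb v = b v := rfl

lemma int_neg_one_sq_pow (k : ℕ) : ((-1 : ℤ)) ^ k * ((-1 : ℤ)) ^ k = 1 := by
  rw [← pow_add, ← two_mul, pow_mul]
  norm_num

lemma compl_card {m p : ℕ} (hp : p ≤ m) {S : Finset (Fin m)} (hS : S.card = p) :
    Sᶜ.card = m - p := by
  rw [Finset.card_compl, hS, Fintype.card_fin]

/-- The underlying function of the canonical unshuffle. -/
def unsFun {m p : ℕ} (hp : p ≤ m) (S : Finset (Fin m)) (hS : S.card = p) :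
    Fin m → Fin m := fun j =>
  if h : (j : ℕ) < p then S.orderEmbOfFin hS ⟨j, h⟩
  else Sᶜ.orderEmbOfFin (compl_card hp hS) ⟨(j : ℕ) - p, by omega⟩

lemma unsFun_inj {m p : ℕ} (hp : p ≤ m) (S : Finset (Fin m)) (hS : S.card = p) :
    Function.Injective (unsFun hp S hS) := by
      intro j1 j2 heq
      simp only [unsFun] at heq
      by_cases h1 : (j1 : ℕ) < p <;> by_cases h2 : (j2 : ℕ) < p
      · rw [dif_pos h1, dif_pos h2] at heq
        have := (S.orderEmbOfFin hS).injective heq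
        have hv : (j1 : ℕ) = (j2 : ℕ) := by
          have h2 := congrArg Fin.val this
          simpa using h2
        exact Fin.ext hv
      · rw [dif_pos h1, dif_neg h2] at heq
        have hm1 := Finset.orderEmbOfFin_mem S hS ⟨j1, h1⟩
        have hm2 := Finset.orderEmbOfFin_mem Sᶜ (compl_card hp hS) ⟨(j2:ℕ) - p, by omega⟩
        rw [← heq, Finset.mem_compl] at hm2
        exact absurd hm1 hm2
      · rw [dif_neg h1, dif_pos h2] at heq
        have hm1 := Finset.orderEmbOfFin_mem S hS ⟨j2, h2⟩
        have hm2 := Finset.orderEmbOfFin_mem Sᶜ (compl_card hp hS) ⟨(j1:ℕ) - p, by omega⟩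
        rw [heq, Finset.mem_compl] at hm2
        exact absurd hm1 hm2
      · rw [dif_neg h1, dif_neg h2] at heq
        have := (Sᶜ.orderEmbOfFin (compl_card hp hS)).injective heq
        have hv : (j1 : ℕ) - p = (j2 : ℕ) - p := congrArg Fin.val this
        exact Fin.ext (by omega)

/-- The canonical `(p, m-p)`-unshuffle whose first block enumerates `S`. -/
noncomputable def unshuffleOf {m p : ℕ} (hp : p ≤ m) (S : Finset (Fin m)) (hS : S.card = p) :
    Equiv.Perm (Fin m) :=
  Equiv.ofBijective (unsFun hp S hS)
    (by rw [← Finite.injective_iff_bijective]; exact unsFun_inj hp S hS)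

lemma unshuffleOf_lt {m p : ℕ} (hp : p ≤ m) (S : Finset (Fin m)) (hS : S.card = p)
    {j : Fin m} (h : (j : ℕ) < p) :
    unshuffleOf hp S hS j = S.orderEmbOfFin hS ⟨j, h⟩ := dif_pos h

lemma unshuffleOf_ge {m p : ℕ} (hp : p ≤ m) (S : Finset (Fin m)) (hS : S.card = p)
    {j : Fin m} (h : ¬ (j : ℕ) < p) :
    unshuffleOf hp S hS j
      = Sᶜ.orderEmbOfFin (compl_card hp hS) ⟨(j : ℕ) - p, by omega⟩ := dif_neg h

lemma unshuffleOf_mem_filter {m p : ℕ} (hp : p ≤ m) (S : Finset (Fin m)) (hS : S.card = p) :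
    ∀ i j : Fin m, i < j → ((j : ℕ) < p ∨ p ≤ (i : ℕ)) →
      unshuffleOf hp S hS i < unshuffleOf hp S hS j := by
  intro i j hij hc
  rcases hc with hc | hc
  · have hi : (i : ℕ) < p := lt_trans hij hc
    rw [unshuffleOf_lt hp S hS hi, unshuffleOf_lt hp S hS hc]
    exact (S.orderEmbOfFin hS).strictMono (by exact hij)
  · have hj : ¬ (j : ℕ) < p := by
      have : (i : ℕ) < (j : ℕ) := hij
      omega
    have hi : ¬ (i : ℕ) < p := by omega
    rw [unshuffleOf_ge hp S hS hi, unshuffleOf_ge hp S hS hj]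
    refine (Sᶜ.orderEmbOfFin (compl_card hp hS)).strictMono ?_
    show ((i : ℕ) - p) < ((j : ℕ) - p)
    have : (i : ℕ) < (j : ℕ) := hij
    omega

lemma image_orderEmbOfFin {m p : ℕ} (S : Finset (Fin m)) (hS : S.card = p) :
    Finset.image (S.orderEmbOfFin hS) Finset.univ = S := by
  ext a
  simp only [mem_image, mem_univ, true_and]
  constructor
  · rintro ⟨i, rfl⟩; exact Finset.orderEmbOfFin_mem S hS i
  · intro ha
    have : a ∈ Set.range (S.orderEmbOfFin hS) := by
      rw [Finset.range_orderEmbOfFin]; exact ha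
    obtain ⟨i, hi⟩ := this
    exact ⟨i, hi⟩

lemma unshuffleOf_image {m p : ℕ} (hp : p ≤ m) (S : Finset (Fin m)) (hS : S.card = p) :
    Finset.image (unshuffleOf hp S hS)
      (Finset.univ.filter (fun j : Fin m => (j : ℕ) < p)) = S := by
  rw [filter_lt_eq_image m p hp, Finset.image_image]
  rw [show (⇑(unshuffleOf hp S hS) ∘ Fin.castLE hp) = ⇑(S.orderEmbOfFin hS) from ?_]
  · exact image_orderEmbOfFin S hS
  · funext i
    have h : ((Fin.castLE hp i : Fin m) : ℕ) < p := i.2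
    rw [Function.comp_apply, unshuffleOf_lt hp S hS h]
    congr 1

lemma unshuffle_eq_of_image {m p : ℕ} (hp : p ≤ m) (S : Finset (Fin m)) (hS : S.card = p)
    (σ : Equiv.Perm (Fin m))
    (hσ : ∀ i j : Fin m, i < j → ((j : ℕ) < p ∨ p ≤ (i : ℕ)) → σ i < σ j)
    (him : Finset.image σ (Finset.univ.filter (fun j : Fin m => (j : ℕ) < p)) = S) :
    σ = unshuffleOf hp S hS := by
  have hmem_iff : ∀ j : Fin m, σ j ∈ S ↔ (j : ℕ) < p := by
    intro j
    rw [← him]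
    constructor
    · intro h
      obtain ⟨j', hj', heq⟩ := Finset.mem_image.1 h
      have := σ.injective heq
      subst this
      exact (Finset.mem_filter.1 hj').2
    · intro h
      exact Finset.mem_image_of_mem _ (Finset.mem_filter.2 ⟨Finset.mem_univ _, h⟩)
  have hfirst : (fun i : Fin p => σ (Fin.castLE hp i)) = ⇑(S.orderEmbOfFin hS) := by
    refine Finset.orderEmbOfFin_unique hS ?_ ?_
    · intro i
      exact (hmem_iff _).2 i.2
    · intro i j hij
      exact hσ _ _ (by exact hij) (Or.inl (show ((Fin.castLE hp j : Fin m) : ℕ) < p from j.2))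
  have hsecond : (fun i : Fin (m - p) => σ ⟨p + (i : ℕ), by omega⟩)
      = ⇑(Sᶜ.orderEmbOfFin (compl_card hp hS)) := by
    refine Finset.orderEmbOfFin_unique _ ?_ ?_
    · intro i
      rw [Finset.mem_compl]
      intro hmem
      have := (hmem_iff _).1 hmem
      simp at this
    · intro i j hij
      refine hσ _ _ ?_ (Or.inr (by simp))
      show (p + (i:ℕ)) < (p + (j:ℕ))
      omega
  refine Equiv.ext fun j => ?_
  by_cases h : (j : ℕ) < p
  · rw [unshuffleOf_lt hp S hS h, ← hfirst]
    exact congrArg σ (Fin.ext rfl)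
  · rw [unshuffleOf_ge hp S hS h, ← hsecond]
    refine congrArg σ (Fin.ext ?_)
    show (j : ℕ) = p + ((j : ℕ) - p)
    omega

end Conv

section Conv2

variable {K : Type*} [Field K] {g : Type*} [AddCommGroup g] [Module K g] {m : ℕ}

/-- The subset-indexed form of the alternating sum. -/
def phiSum {A : Type*} [AddCommMonoid A] (b : (Fin m → g) → g) (P : A → Module.End K g)
    (β : Fin m → A) (x : Fin m → g) : g :=
  ∑ S ∈ (Finset.univ : Finset (Fin m)).powerset,
    ((-1 : ℤ) ^ S.card) •
      P (∑ i ∈ S, β i) (b (fun i => if i ∈ S then x i else P (β i) (x i)))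

lemma term_eq {A : Type*} [AddCommMonoid A] (b : (Fin m → g) → g) (hb : IsSkewMultilinear K b)
    (P : A → Module.End K g) (β : Fin m → A) (x : Fin m → g) {p : ℕ} (hp : p ≤ m)
    (σ : Equiv.Perm (Fin m))
    (hσ : ∀ i j : Fin m, i < j → ((j : ℕ) < p ∨ p ≤ (i : ℕ)) → σ i < σ j)
    {S : Finset (Fin m)}
    (hSim : Finset.image σ (Finset.univ.filter (fun j : Fin m => (j : ℕ) < p)) = S) :
    ((-1 : ℤ) ^ (p * (p - 1) / 2 +
        ∑ j ∈ Finset.univ.filter (fun j : Fin m => (j : ℕ) < p), ((σ j : ℕ) + 1))) •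
      P (∑ j ∈ Finset.univ.filter (fun j : Fin m => (j : ℕ) < p), β (σ j))
        (b (fun j => if (j : ℕ) < p then x (σ j) else P (β (σ j)) (x (σ j))))
    = ((-1 : ℤ) ^ S.card) •
        P (∑ i ∈ S, β i) (b (fun i => if i ∈ S then x i else P (β i) (x i))) := by
  have hcard : S.card = p := by
    rw [← hSim, Finset.card_image_of_injective _ σ.injective, card_filter_lt m p hp]
  have hmem_iff : ∀ j : Fin m, σ j ∈ S ↔ (j : ℕ) < p := by
    intro j
    rw [← hSim]
    constructor
    · intro h
      obtain ⟨j', hj', heq⟩ := Finset.mem_image.1 h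
      have := σ.injective heq
      subst this
      exact (Finset.mem_filter.1 hj').2
    · intro h
      exact Finset.mem_image_of_mem _ (Finset.mem_filter.2 ⟨Finset.mem_univ _, h⟩)
  have harg : (fun j : Fin m => if (j : ℕ) < p then x (σ j) else P (β (σ j)) (x (σ j)))
      = (fun i => if i ∈ S then x i else P (β i) (x i)) ∘ ⇑σ := by
    funext j
    simp only [Function.comp_apply]
    by_cases h : (j : ℕ) < p
    · rw [if_pos h, if_pos ((hmem_iff j).2 h)]
    · rw [if_neg h, if_neg (fun hm => h ((hmem_iff j).1 hm))]
  have hsums : ∑ j ∈ Finset.univ.filter (fun j : Fin m => (j : ℕ) < p), β (σ j)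
      = ∑ i ∈ S, β i := by
    rw [← hSim, Finset.sum_image (fun a _ c _ h => σ.injective h)]
  have hperm : b (fun j => if (j : ℕ) < p then x (σ j) else P (β (σ j)) (x (σ j)))
      = Equiv.Perm.sign σ • b (fun i => if i ∈ S then x i else P (β i) (x i)) := by
    rw [harg, ← altMapOf_apply b hb, ← altMapOf_apply b hb]
    exact AlternatingMap.map_perm (altMapOf b hb) _ σ
  rw [hperm, hsums, hcard]
  rw [Units.smul_def, map_zsmul, smul_smul]
  congr 1
  -- coefficient computation
  have hsign := unshuffle_sign m p hp σ hσ
  have hsign' : ((Equiv.Perm.sign σ : ℤˣ) : ℤ)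
      = (-1 : ℤ) ^ (p * (p - 1) / 2 +
          ∑ j ∈ Finset.univ.filter (fun j : Fin m => (j : ℕ) < p), (σ j : ℕ)) := by
    rw [hsign]
    push_cast
    rfl
  rw [hsign']
  have hadd : ∑ j ∈ Finset.univ.filter (fun j : Fin m => (j : ℕ) < p), ((σ j : ℕ) + 1)
      = (∑ j ∈ Finset.univ.filter (fun j : Fin m => (j : ℕ) < p), (σ j : ℕ)) + p := by
    rw [Finset.sum_add_distrib, Finset.sum_const, card_filter_lt m p hp, smul_eq_mul, mul_one]
  rw [hadd]
  set T := ∑ j ∈ Finset.univ.filter (fun j : Fin m => (j : ℕ) < p), (σ j : ℕ)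
  set D := p * (p - 1) / 2
  rw [show D + (T + p) = p + (D + T) by ring, pow_add, mul_assoc, int_neg_one_sq_pow, mul_one]

lemma conv {A : Type*} [AddCommMonoid A] (b : (Fin m → g) → g) (hb : IsSkewMultilinear K b)
    (P : A → Module.End K g) (β : Fin m → A) (x : Fin m → g) :
    ∑ p ∈ Finset.range (m + 1),
      ∑ σ ∈ Finset.univ.filter (fun σ : Equiv.Perm (Fin m) =>
          ∀ i j : Fin m, i < j → ((j : ℕ) < p ∨ p ≤ (i : ℕ)) → σ i < σ j),
        ((-1 : ℤ) ^ (p * (p - 1) / 2 +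
            ∑ j ∈ Finset.univ.filter (fun j : Fin m => (j : ℕ) < p), ((σ j : ℕ) + 1))) •
          P (∑ j ∈ Finset.univ.filter (fun j : Fin m => (j : ℕ) < p), β (σ j))
            (b (fun j => if (j : ℕ) < p then x (σ j) else P (β (σ j)) (x (σ j))))
    = phiSum b P β x := by
  rw [phiSum, Finset.sum_powerset]
  rw [show ((Finset.univ : Finset (Fin m)).card) = m by simp]
  refine Finset.sum_congr rfl fun p hp => ?_
  have hpm : p ≤ m := Nat.lt_succ_iff.mp (Finset.mem_range.1 hp)
  refine Finset.sum_bij'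
    (i := fun σ _ => Finset.image σ (Finset.univ.filter (fun j : Fin m => (j : ℕ) < p)))
    (j := fun S hS => unshuffleOf hpm S (Finset.mem_powersetCard.1 hS).2)
    ?_ ?_ ?_ ?_ ?_
  · intro σ hσ
    rw [Finset.mem_powersetCard]
    refine ⟨Finset.subset_univ _, ?_⟩
    rw [Finset.card_image_of_injective _ σ.injective, card_filter_lt m p hpm]
  · intro S hS
    rw [Finset.mem_filter]
    exact ⟨Finset.mem_univ _, unshuffleOf_mem_filter hpm S (Finset.mem_powersetCard.1 hS).2⟩
  · intro σ hσ
    exact (unshuffle_eq_of_image hpm _ _ σ (fun i j a c => (Finset.mem_filter.1 hσ).2 i j a c)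
      rfl).symm
  · intro S hS
    exact unshuffleOf_image hpm S (Finset.mem_powersetCard.1 hS).2
  · intro σ hσ
    exact term_eq b hb P β x hpm σ (fun i j a c => (Finset.mem_filter.1 hσ).2 i j a c) rfl

end Conv2

section Rec

variable {K : Type*} [Field K] {g : Type*} [AddCommGroup g] [Module K g] {m : ℕ}
variable {A : Type*} [AddCommMonoid A] (b : (Fin m → g) → g)
variable (P : A → Module.End K g)

lemma rec_term1 (hP : ∀ s t, P (s + t) = P s * P t) (δ : A) (α : Fin m → A) (k : Fin m)
    (x : Fin m → g) {T : Finset (Fin m)} (hkT : k ∉ T) :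
    ((-1 : ℤ) ^ T.card) • P (∑ i ∈ T, Function.update α k (α k + δ) i)
        (b fun i => if i ∈ T then x i else P (Function.update α k (α k + δ) i) (x i))
      = ((-1 : ℤ) ^ T.card) • P (∑ i ∈ T, α i)
          (b fun i => if i ∈ T then Function.update x k (P δ (x k)) i
            else P (α i) (Function.update x k (P δ (x k)) i)) := by
  have hs : ∑ i ∈ T, Function.update α k (α k + δ) i = ∑ i ∈ T, α i :=
    Finset.sum_congr rfl fun i hi =>
      Function.update_of_ne (ne_of_mem_of_not_mem hi hkT) _ _
  have hbarg : (fun i => if i ∈ T then x i else P (Function.update α k (α k + δ) i) (x i))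
      = (fun i => if i ∈ T then Function.update x k (P δ (x k)) i
          else P (α i) (Function.update x k (P δ (x k)) i)) := by
    funext i
    by_cases hi : i ∈ T
    · rw [if_pos hi, if_pos hi,
        Function.update_of_ne (ne_of_mem_of_not_mem hi hkT) _ _]
    · rw [if_neg hi, if_neg hi]
      by_cases hik : i = k
      · subst hik
        rw [Function.update_self, Function.update_self, hP]
        rfl
      · rw [Function.update_of_ne hik, Function.update_of_ne hik]
  rw [hs, hbarg]

lemma rec_term2 (hP : ∀ s t, P (s + t) = P s * P t) (δ : A) (α : Fin m → A) (k : Fin m)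
    (x : Fin m → g) {T : Finset (Fin m)} (hkT : k ∉ T) :
    ((-1 : ℤ) ^ (insert k T).card) • P (∑ i ∈ insert k T, Function.update α k (α k + δ) i)
        (b fun i => if i ∈ insert k T then x i
          else P (Function.update α k (α k + δ) i) (x i))
      = P (α k) (((-1 : ℤ) ^ (insert k T).card) •
          P (∑ i ∈ insert k T, Function.update α k δ i)
            (b fun i => if i ∈ insert k T then x i
              else P (Function.update α k δ i) (x i))) := by
  rw [map_zsmul]
  congr 1
  have harg : (fun i => if i ∈ insert k T then x i
        else P (Function.update α k (α k + δ) i) (x i))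
      = (fun i => if i ∈ insert k T then x i else P (Function.update α k δ i) (x i)) := by
    funext i
    by_cases hi : i ∈ insert k T
    · rw [if_pos hi, if_pos hi]
    · have hik : i ≠ k := fun h => hi (h ▸ Finset.mem_insert_self k T)
      rw [if_neg hi, if_neg hi, Function.update_of_ne hik, Function.update_of_ne hik]
  have hsums : ∀ β : Fin m → A, ∑ i ∈ T, Function.update β k (β k) i = ∑ i ∈ T, β i :=
    fun β => Finset.sum_congr rfl fun i hi =>
      Function.update_of_ne (ne_of_mem_of_not_mem hi hkT) _ _
  have hSum1 : ∑ i ∈ insert k T, Function.update α k (α k + δ) i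
      = (α k + δ) + ∑ i ∈ T, α i := by
    rw [Finset.sum_insert hkT, Function.update_self]
    congr 1
    exact Finset.sum_congr rfl fun i hi =>
      Function.update_of_ne (ne_of_mem_of_not_mem hi hkT) _ _
  have hSum3 : ∑ i ∈ insert k T, Function.update α k δ i = δ + ∑ i ∈ T, α i := by
    rw [Finset.sum_insert hkT, Function.update_self]
    congr 1
    exact Finset.sum_congr rfl fun i hi =>
      Function.update_of_ne (ne_of_mem_of_not_mem hi hkT) _ _
  rw [harg, hSum1, hSum3, add_assoc, hP]
  rfl

lemma rec_term3 (hP : ∀ s t, P (s + t) = P s * P t) (δ : A) (α : Fin m → A) (k : Fin m)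
    (x : Fin m → g) {T : Finset (Fin m)} (hkT : k ∉ T) :
    ((-1 : ℤ) ^ (insert k T).card) • P (∑ i ∈ insert k T, α i)
        (b fun i => if i ∈ insert k T then Function.update x k (P δ (x k)) i
          else P (α i) (Function.update x k (P δ (x k)) i))
      + P (α k) (((-1 : ℤ) ^ T.card) • P (∑ i ∈ T, Function.update α k δ i)
          (b fun i => if i ∈ T then x i else P (Function.update α k δ i) (x i))) = 0 := by
  rw [map_zsmul]
  have hargs : (fun i => if i ∈ insert k T then Function.update x k (P δ (x k)) i
        else P (α i) (Function.update x k (P δ (x k)) i))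
      = (fun i => if i ∈ T then x i else P (Function.update α k δ i) (x i)) := by
    funext i
    by_cases hik : i = k
    · subst hik
      rw [if_pos (Finset.mem_insert_self i T), if_neg hkT, Function.update_self,
        Function.update_self]
    · by_cases hi : i ∈ T
      · rw [if_pos (Finset.mem_insert_of_mem hi), if_pos hi, Function.update_of_ne hik]
      · have : i ∉ insert k T := by
          rw [Finset.mem_insert]; push_neg; exact ⟨hik, hi⟩
        rw [if_neg this, if_neg hi, Function.update_of_ne hik, Function.update_of_ne hik]
  have hSumA : ∑ i ∈ insert k T, α i = α k + ∑ i ∈ T, α i := Finset.sum_insert hkT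
  have hSumB : ∑ i ∈ T, Function.update α k δ i = ∑ i ∈ T, α i :=
    Finset.sum_congr rfl fun i hi =>
      Function.update_of_ne (ne_of_mem_of_not_mem hi hkT) _ _
  have happ : P (α k) (P (∑ i ∈ T, α i)
      (b fun i => if i ∈ T then x i else P (Function.update α k δ i) (x i)))
      = P (α k + ∑ i ∈ T, α i)
        (b fun i => if i ∈ T then x i else P (Function.update α k δ i) (x i)) := by
    rw [hP]; rfl
  rw [hargs, hSumA, hSumB, happ, Finset.card_insert_of_notMem hkT, pow_succ, mul_neg_one,
    neg_smul, neg_add_cancel]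

lemma add_shuffle {G : Type*} [AddCommGroup G] (a b c d : G) (h : b + c = 0) :
    a + d = (a + b) + (c + d) := by
  have hb : b = -c := eq_neg_of_add_eq_zero_left h
  rw [hb]
  abel

lemma phi_rec (hP : ∀ s t, P (s + t) = P s * P t) (δ : A) (α : Fin m → A) (k : Fin m)
    (x : Fin m → g) :
    phiSum b P (Function.update α k (α k + δ)) x
      = phiSum b P α (Function.update x k (P δ (x k)))
        + P (α k) (phiSum b P (Function.update α k δ) x) := by
  classical
  have hsplit : ∀ F : Finset (Fin m) → g,
      ∑ S ∈ (Finset.univ : Finset (Fin m)).powerset, F S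
        = ∑ T ∈ ((Finset.univ : Finset (Fin m)).erase k).powerset, F T
          + ∑ T ∈ ((Finset.univ : Finset (Fin m)).erase k).powerset, F (insert k T) := by
    intro F
    conv_lhs => rw [← Finset.insert_erase (Finset.mem_univ k)]
    exact Finset.sum_powerset_insert (Finset.notMem_erase k _) F
  have hkT : ∀ T ∈ ((Finset.univ : Finset (Fin m)).erase k).powerset, k ∉ T := by
    intro T hT hk
    exact (Finset.mem_erase.1 (Finset.mem_powerset.1 hT hk)).1 rfl
  set F1 : Finset (Fin m) → g := fun S => ((-1 : ℤ) ^ S.card) •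
      P (∑ i ∈ S, Function.update α k (α k + δ) i)
        (b fun i => if i ∈ S then x i
          else P (Function.update α k (α k + δ) i) (x i)) with hF1
  set F2 : Finset (Fin m) → g := fun S => ((-1 : ℤ) ^ S.card) •
      P (∑ i ∈ S, α i)
        (b fun i => if i ∈ S then Function.update x k (P δ (x k)) i
          else P (α i) (Function.update x k (P δ (x k)) i)) with hF2
  set F3 : Finset (Fin m) → g := fun S => ((-1 : ℤ) ^ S.card) •
      P (∑ i ∈ S, Function.update α k δ i)
        (b fun i => if i ∈ S then x i
          else P (Function.update α k δ i) (x i)) with hF3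
  have e1 : phiSum b P (Function.update α k (α k + δ)) x
      = ∑ S ∈ (Finset.univ : Finset (Fin m)).powerset, F1 S := rfl
  have e2 : phiSum b P α (Function.update x k (P δ (x k)))
      = ∑ S ∈ (Finset.univ : Finset (Fin m)).powerset, F2 S := rfl
  have e3 : phiSum b P (Function.update α k δ) x
      = ∑ S ∈ (Finset.univ : Finset (Fin m)).powerset, F3 S := rfl
  rw [e1, e2, e3, hsplit F1, hsplit F2, hsplit F3, map_add, map_sum, map_sum]
  have key : ∀ T ∈ ((Finset.univ : Finset (Fin m)).erase k).powerset,
      F1 T + F1 (insert k T)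
        = (F2 T + F2 (insert k T))
          + (P (α k) (F3 T) + P (α k) (F3 (insert k T))) := by
    intro T hT
    have hk := hkT T hT
    rw [hF1, hF2, hF3]
    simp only
    rw [rec_term1 b P hP δ α k x hk, rec_term2 b P hP δ α k x hk]
    exact add_shuffle _ _ _ _ (rec_term3 b P hP δ α k x hk)
  have main := Finset.sum_congr rfl key
  rw [Finset.sum_add_distrib, Finset.sum_add_distrib, Finset.sum_add_distrib,
    Finset.sum_add_distrib] at main
  exact main

end Rec

section Base

variable {K : Type*} [Field K] {g : Type*} [AddCommGroup g] [Module K g] {m : ℕ}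

/-- `∑_{|S|=i} b(x with N applied at positions in S)`. -/
def cTerm (b : (Fin m → g) → g) (N : Module.End K g) (i : ℕ) (x : Fin m → g) : g :=
  ∑ S ∈ Finset.powersetCard i (Finset.univ : Finset (Fin m)),
    b (fun r => if r ∈ S then N (x r) else x r)

lemma cTerm_zero (b : (Fin m → g) → g) (N : Module.End K g) (x : Fin m → g) :
    cTerm b N 0 x = b x := by
  have h : (fun r => if r ∈ (∅ : Finset (Fin m)) then N (x r) else x r) = x := by
    funext r; simp
  rw [cTerm, Finset.powersetCard_zero, Finset.sum_singleton, h]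

lemma cTerm_top (b : (Fin m → g) → g) (N : Module.End K g) (x : Fin m → g) :
    cTerm b N m x = b (fun r => N (x r)) := by
  have hp2 : Finset.powersetCard m (Finset.univ : Finset (Fin m)) = {Finset.univ} := by
    have h := Finset.powersetCard_self (Finset.univ : Finset (Fin m))
    rwa [Finset.card_univ, Fintype.card_fin] at h
  rw [cTerm, hp2, Finset.sum_singleton]
  congr 1
  funext r
  simp

lemma nested_closed (b : (Fin m → g) → g) (N : Module.End K g) :
    ∀ (j : ℕ) (x : Fin m → g), nestedBracket b N j x
      = ∑ i ∈ Finset.range (j+1), ((-1:ℤ)^i) • (N^i) (cTerm b N (j-i) x) := by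
  intro j
  induction j with
  | zero =>
    intro x
    rw [show nestedBracket b N 0 x = b x from rfl]
    rw [Finset.sum_range_one]
    simp [cTerm_zero]
  | succ j IH =>
    intro x
    have hdef : nestedBracket b N (j+1) x = cTerm b N (j+1) x - N (nestedBracket b N j x) :=
      rfl
    rw [hdef, IH, map_sum]
    conv_rhs => rw [Finset.sum_range_succ']
    have h0 : ((-1:ℤ)^(0:ℕ)) • (N^(0:ℕ)) (cTerm b N (j+1-0) x) = cTerm b N (j+1) x := by
      simp
    rw [h0]
    have hterm : ∀ i ∈ Finset.range (j+1),
        ((-1:ℤ)^(i+1)) • (N^(i+1)) (cTerm b N (j+1-(i+1)) x)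
          = -(N (((-1:ℤ)^i) • (N^i) (cTerm b N (j-i) x))) := by
      intro i hi
      rw [Nat.succ_sub_succ, map_zsmul, pow_succ (-1:ℤ) i, mul_neg_one, neg_smul,
        pow_succ' N i, Module.End.mul_apply]
    rw [Finset.sum_congr rfl hterm, Finset.sum_neg_distrib]
    abel

lemma phi_base {n : ℕ} (b : (Fin (n+1) → g) → g) (N : Module.End K g)
    (hN : IsNijenhuis b N) {A : Type*} [AddCommMonoid A]
    (P : A → Module.End K g) (hP : ∀ s t, P (s + t) = P s * P t) (hP0 : P 0 = 1)
    (δ : A) (hδ : P δ = N) (x : Fin (n+1) → g) :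
    phiSum b P (fun _ => δ) x = 0 := by
  have hnsmul : ∀ c : ℕ, P (c • δ) = N ^ c := by
    intro c
    induction c with
    | zero => rw [zero_smul, hP0, pow_zero]
    | succ c IH => rw [succ_nsmul, hP, IH, hδ, pow_succ]
  have step2 : phiSum b P (fun _ => δ) x
      = ∑ S ∈ (Finset.univ : Finset (Fin (n+1))).powerset,
          ((-1:ℤ)^S.card) • (N ^ S.card) (b fun i => if i ∈ S then x i else N (x i)) := by
    rw [phiSum]
    refine Finset.sum_congr rfl fun S _ => ?_
    rw [Finset.sum_const, hnsmul, hδ]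
  have step3 : phiSum b P (fun _ => δ) x
      = ∑ S ∈ (Finset.univ : Finset (Fin (n+1))).powerset,
          ((-1:ℤ)^(n+1-S.card)) • (N ^ (n+1-S.card))
            (b fun i => if i ∈ S then N (x i) else x i) := by
    rw [step2]
    refine Finset.sum_nbij' (i := fun S => Sᶜ) (j := fun S => Sᶜ) ?_ ?_ ?_ ?_ ?_
    · intro S _; exact Finset.mem_powerset.2 (Finset.subset_univ _)
    · intro S _; exact Finset.mem_powerset.2 (Finset.subset_univ _)
    · intro S _; exact compl_compl S
    · intro S _; exact compl_compl S
    · intro S _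
      have hc2 : n + 1 - Sᶜ.card = S.card := by
        have h1 : S.card ≤ n + 1 := by
          have := Finset.card_le_univ S
          simpa using this
        rw [Finset.card_compl, Fintype.card_fin]
        omega
      rw [hc2]
      congr 2
      refine congrArg b (funext fun i => ?_)
      show (if i ∈ S then x i else N (x i)) = (if i ∈ Sᶜ then N (x i) else x i)
      by_cases hi : i ∈ S
      · rw [if_pos hi, if_neg (by simpa using hi)]
      · rw [if_neg hi, if_pos (Finset.mem_compl.2 hi)]
  have step4 : phiSum b P (fun _ => δ) x
      = ∑ i ∈ Finset.range (n+2),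
          ((-1:ℤ)^(n+1-i)) • (N ^ (n+1-i)) (cTerm b N i x) := by
    rw [step3, Finset.sum_powerset, show ((Finset.univ : Finset (Fin (n+1))).card) = n+1 by simp]
    refine Finset.sum_congr rfl fun i _ => ?_
    rw [cTerm, map_sum, Finset.smul_sum]
    refine Finset.sum_congr rfl fun S hS => ?_
    rw [(Finset.mem_powersetCard.1 hS).2]
  have step5 : phiSum b P (fun _ => δ) x
      = (∑ i ∈ Finset.range (n+1),
          ((-1:ℤ)^(n+1-i)) • (N ^ (n+1-i)) (cTerm b N i x)) + b (fun r => N (x r)) := by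
    rw [step4, Finset.sum_range_succ]
    congr 1
    rw [Nat.sub_self, pow_zero, pow_zero, one_smul, Module.End.one_apply, cTerm_top]
  have step6 : ∑ i ∈ Finset.range (n+1),
      ((-1:ℤ)^(n+1-i)) • (N ^ (n+1-i)) (cTerm b N i x) = - N (nestedBracket b N n x) := by
    rw [nested_closed b N n x, map_sum, ← Finset.sum_neg_distrib]
    rw [← Finset.sum_range_reflect]
    refine Finset.sum_congr rfl fun i hi => ?_
    have hin : i ≤ n := Nat.lt_succ_iff.mp (Finset.mem_range.1 hi)
    have h1 : n + 1 - (n - i) = i + 1 := by omega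
    have h2 : n + 1 - 1 - i = n - i := by omega
    rw [h2, h1, map_zsmul, pow_succ (-1:ℤ) i, mul_neg_one, neg_smul, pow_succ' N i,
      Module.End.mul_apply]
  rw [step5, step6, hN x, neg_add_cancel]

end Base

section Induct

variable {K : Type*} [Field K] {g : Type*} [AddCommGroup g] [Module K g] {m : ℕ}
variable {A : Type*} [AddCommMonoid A]

lemma phi_pos (b : (Fin m → g) → g) (P : A → Module.End K g)
    (hP : ∀ s t, P (s + t) = P s * P t) (δ : A)
    (hbase : ∀ x, phiSum b P (fun _ => δ) x = 0) :
    ∀ (t : ℕ) (c : Fin m → ℕ), (∑ i, c i) = t → (∀ i, 1 ≤ c i) →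
      ∀ x, phiSum b P (fun i => c i • δ) x = 0 := by
  intro t
  induction t using Nat.strong_induction_on with
  | _ t IH =>
  intro c hct hc1 x
  by_cases hall : ∀ i, c i = 1
  · have h : (fun i => c i • δ) = (fun _ => δ) := by
      funext i; rw [hall i, one_smul]
    rw [h]; exact hbase x
  · push_neg at hall
    obtain ⟨k, hk⟩ := hall
    have hk2 : 2 ≤ c k := by have := hc1 k; omega
    have hckt : c k ≤ t := by
      rw [← hct]
      exact Finset.single_le_sum (fun i _ => Nat.zero_le _) (Finset.mem_univ k)
    set c' := Function.update c k (c k - 1) with hc'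
    have herase : ∀ i ∈ Finset.univ.erase k, c' i = c i := fun i hi =>
      Function.update_of_ne (Finset.mem_erase.1 hi).1 _ _
    have hsumerase : ∑ i ∈ Finset.univ.erase k, c i = t - c k := by
      have h2 := Finset.add_sum_erase Finset.univ c (Finset.mem_univ k)
      omega
    have hsum' : ∑ i, c' i = t - 1 := by
      have h1 := Finset.add_sum_erase Finset.univ c' (Finset.mem_univ k)
      rw [Finset.sum_congr rfl herase, hsumerase] at h1
      rw [← h1, hc', Function.update_self]
      omega
    have hstep : (fun i => c i • δ)
        = Function.update (fun i => c' i • δ) k ((fun i => c' i • δ) k + δ) := by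
      funext i
      by_cases hik : i = k
      · subst hik
        simp only [Function.update_self, hc']
        have h3 : c i = (c i - 1) + 1 := by omega
        conv_lhs => rw [h3]
        rw [succ_nsmul]
      · rw [Function.update_of_ne hik, hc', Function.update_of_ne hik]
    rw [hstep, phi_rec b P hP δ _ k x]
    have hpos' : ∀ i, 1 ≤ c' i := by
      intro i
      by_cases hik : i = k
      · subst hik; rw [hc', Function.update_self]; omega
      · rw [hc', Function.update_of_ne hik]; exact hc1 i
    have hz1 : phiSum b P (fun i => c' i • δ) (Function.update x k (P δ (x k))) = 0 :=
      IH (t - 1) (by omega) c' hsum' hpos' _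
    have hupd : Function.update (fun i => c' i • δ) k δ
        = fun i => (Function.update c' k 1) i • δ := by
      funext i
      by_cases hik : i = k
      · subst hik; rw [Function.update_self, Function.update_self, one_smul]
      · rw [Function.update_of_ne hik, Function.update_of_ne hik]
    have hsum'' : ∑ i, (Function.update c' k 1) i = t - c k + 1 := by
      have h1 := Finset.add_sum_erase Finset.univ (Function.update c' k 1)
        (Finset.mem_univ k)
      have h2 : ∀ i ∈ Finset.univ.erase k, (Function.update c' k 1) i = c i := fun i hi => by
        rw [Function.update_of_ne (Finset.mem_erase.1 hi).1]; exact herase i hi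
      rw [Finset.sum_congr rfl h2, hsumerase, Function.update_self] at h1
      omega
    have hpos'' : ∀ i, 1 ≤ (Function.update c' k 1) i := by
      intro i
      by_cases hik : i = k
      · subst hik; rw [Function.update_self]
      · rw [Function.update_of_ne hik]; exact hpos' i
    have hz2 : phiSum b P (Function.update (fun i => c' i • δ) k δ) x = 0 := by
      rw [hupd]
      exact IH (t - c k + 1) (by omega) _ hsum'' hpos'' x
    rw [hz1, hz2, map_zero, add_zero]

end Induct

section IntCase

variable {K : Type*} [Field K] {g : Type*} [AddCommGroup g] [Module K g] {m : ℕ}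

lemma phi_int (b : (Fin m → g) → g) (N : Module.End K g) (u : (Module.End K g)ˣ)
    (hu : (u : Module.End K g) = N)
    (hbase : ∀ x, phiSum b (fun s : ℤ => ((u ^ s : (Module.End K g)ˣ) : Module.End K g))
      (fun _ => (1 : ℤ)) x = 0) :
    ∀ (d : ℕ) (α : Fin m → ℤ), (∑ i, (1 - α i).toNat) = d →
      ∀ x, phiSum b (fun s : ℤ => ((u ^ s : (Module.End K g)ˣ) : Module.End K g)) α x = 0 := by
  set P : ℤ → Module.End K g := fun s => ((u ^ s : (Module.End K g)ˣ) : Module.End K g)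
    with hPdef
  have hP : ∀ s t : ℤ, P (s + t) = P s * P t := by
    intro s t
    rw [hPdef]
    simp only
    rw [zpow_add, Units.val_mul]
  intro d
  induction d using Nat.strong_induction_on with
  | _ d IH =>
  intro α hαd x
  rcases Nat.eq_zero_or_pos d with hd0 | hdpos
  · -- all exponents are positive: reduce to phi_pos
    subst hd0
    have hnonneg : ∀ i, 1 ≤ α i := by
      intro i
      have h1 : (1 - α i).toNat = 0 := by
        have := Finset.sum_eq_zero_iff.1 hαd i (Finset.mem_univ i)
        exact this
      omega
    have hform : α = fun i => (α i).toNat • (1 : ℤ) := by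
      funext i
      rw [nsmul_eq_mul, mul_one]
      have := hnonneg i
      omega
    rw [hform]
    refine phi_pos b P hP 1 hbase (∑ i, (α i).toNat) _ rfl (fun i => ?_) x
    have := hnonneg i
    omega
  · -- some exponent is ≤ 0
    have hne : ∃ k, (1 - α k).toNat ≠ 0 := by
      by_contra hcon
      push_neg at hcon
      rw [Finset.sum_eq_zero (fun i _ => hcon i)] at hαd
      omega
    obtain ⟨k, hk⟩ := hne
    have hαk : α k ≤ 0 := by omega
    -- measures
    have hrec := phi_rec b P hP 1 α k
    have hz1 : ∀ y, phiSum b P (Function.update α k (α k + 1)) y = 0 := by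
      intro y
      refine IH (∑ i, (1 - Function.update α k (α k + 1) i).toNat) ?_ _ rfl y
      have h1 := Finset.add_sum_erase Finset.univ
        (fun i => (1 - Function.update α k (α k + 1) i).toNat) (Finset.mem_univ k)
      have h2 := Finset.add_sum_erase Finset.univ
        (fun i => (1 - α i).toNat) (Finset.mem_univ k)
      have h3 : ∀ i ∈ Finset.univ.erase k,
          (1 - Function.update α k (α k + 1) i).toNat = (1 - α i).toNat := fun i hi => by
        rw [Function.update_of_ne (Finset.mem_erase.1 hi).1]
      rw [Finset.sum_congr rfl h3] at h1
      simp only [Function.update_self] at h1 h2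
      omega
    have hz2 : ∀ y, phiSum b P (Function.update α k 1) y = 0 := by
      intro y
      refine IH (∑ i, (1 - Function.update α k 1 i).toNat) ?_ _ rfl y
      have h1 := Finset.add_sum_erase Finset.univ
        (fun i => (1 - Function.update α k 1 i).toNat) (Finset.mem_univ k)
      have h2 := Finset.add_sum_erase Finset.univ
        (fun i => (1 - α i).toNat) (Finset.mem_univ k)
      have h3 : ∀ i ∈ Finset.univ.erase k,
          (1 - Function.update α k 1 i).toNat = (1 - α i).toNat := fun i hi => by
        rw [Function.update_of_ne (Finset.mem_erase.1 hi).1]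
      rw [Finset.sum_congr rfl h3] at h1
      simp only [Function.update_self] at h1 h2
      omega
    have hzz : ∀ y, phiSum b P α (Function.update y k (P 1 (y k))) = 0 := by
      intro y
      have h := hrec y
      rw [hz1 y, hz2 y, map_zero, add_zero] at h
      exact h.symm
    -- substitute y := update x k (u⁻¹ (x k))
    have hx := hzz (Function.update x k (((u⁻¹ : (Module.End K g)ˣ) : Module.End K g) (x k)))
    have harg : Function.update (Function.update x k
          (((u⁻¹ : (Module.End K g)ˣ) : Module.End K g) (x k))) k
        (P 1 (Function.update x k
          (((u⁻¹ : (Module.End K g)ˣ) : Module.End K g) (x k)) k)) = x := by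
      rw [Function.update_self, Function.update_idem]
      have hP1 : P 1 (((u⁻¹ : (Module.End K g)ˣ) : Module.End K g) (x k)) = x k := by
        rw [hPdef]
        simp only [zpow_one]
        rw [← Module.End.mul_apply, ← Units.val_mul]
        simp
      rw [hP1]
      exact Function.update_eq_self k x
    rw [harg] at hx
    exact hx

end IntCase

/-- If `N` is a Nijenhuis operator on the `(n+1)`-Lie algebra `(g, b)`,
then for all positive integers `α₁,…,α_{n+1}` and all `x₁,…,x_{n+1} ∈ g`,
`∑_{p=0}^{n+1} ∑_σ (−1)^{p(p−1)/2 + ∑_{j≤p} σ(j)}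
   N^{α_{σ(1)}+⋯+α_{σ(p)}} [x_{σ(1)},…,x_{σ(p)}, N^{α_{σ(p+1)}}x_{σ(p+1)},…] = 0`,
summing over `(p, n+1−p)`-unshuffles `σ`; and if `N` is invertible (a unit `u` of
`Module.End K g`), the same holds for arbitrary integer exponents. -/
theorem nijenhuis_power_identity
    {K : Type*} [Field K] {g : Type*} [AddCommGroup g] [Module K g]
    {n : ℕ} (b : (Fin (n + 1) → g) → g) (hb : IsNLieBracket K b)
    (N : Module.End K g) (hN : IsNijenhuis b N) :
    (∀ α : Fin (n + 1) → ℕ, (∀ i, 0 < α i) → ∀ x : Fin (n + 1) → g,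
      ∑ p ∈ Finset.range (n + 2),
        ∑ σ ∈ Finset.univ.filter (fun σ : Equiv.Perm (Fin (n + 1)) =>
            ∀ i j : Fin (n + 1), i < j → ((j : ℕ) < p ∨ p ≤ (i : ℕ)) → σ i < σ j),
          ((-1 : ℤ) ^ (p * (p - 1) / 2 +
              ∑ j ∈ Finset.univ.filter (fun j : Fin (n + 1) => (j : ℕ) < p), ((σ j : ℕ) + 1))) •
            (N ^ (∑ j ∈ Finset.univ.filter (fun j : Fin (n + 1) => (j : ℕ) < p), α (σ j)))
              (b (fun j => if (j : ℕ) < p then x (σ j) else (N ^ α (σ j)) (x (σ j)))) = 0) ∧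
    (∀ u : (Module.End K g)ˣ, (u : Module.End K g) = N →
      ∀ (α : Fin (n + 1) → ℤ) (x : Fin (n + 1) → g),
      ∑ p ∈ Finset.range (n + 2),
        ∑ σ ∈ Finset.univ.filter (fun σ : Equiv.Perm (Fin (n + 1)) =>
            ∀ i j : Fin (n + 1), i < j → ((j : ℕ) < p ∨ p ≤ (i : ℕ)) → σ i < σ j),
          ((-1 : ℤ) ^ (p * (p - 1) / 2 +
              ∑ j ∈ Finset.univ.filter (fun j : Fin (n + 1) => (j : ℕ) < p), ((σ j : ℕ) + 1))) •
            ((u ^ (∑ j ∈ Finset.univ.filter (fun j : Fin (n + 1) => (j : ℕ) < p), α (σ j)) :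
                (Module.End K g)ˣ) : Module.End K g)
              (b (fun j => if (j : ℕ) < p then x (σ j)
                    else ((u ^ α (σ j) : (Module.End K g)ˣ) : Module.End K g) (x (σ j)))) = 0) := by
  constructor
  · intro α hα x
    have hbase := phi_base b N hN (fun t : ℕ => N ^ t)
      (fun s t => pow_add N s t) (pow_zero N) 1 (pow_one N)
    have hzero : phiSum b (fun t : ℕ => N ^ t) α x = 0 := by
      have hform : (fun i => α i • (1 : ℕ)) = α := by
        funext i; simp
      have h := phi_pos b (fun t : ℕ => N ^ t) (fun s t => pow_add N s t) 1 hbase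
        (∑ i, α i) α rfl hα x
      rw [hform] at h
      exact h
    exact (conv b hb.1 (fun t : ℕ => N ^ t) α x).trans hzero
  · intro u hu α x
    subst hu
    have hP : ∀ s t : ℤ, ((u ^ (s + t) : (Module.End K g)ˣ) : Module.End K g)
        = ((u ^ s : (Module.End K g)ˣ) : Module.End K g)
          * ((u ^ t : (Module.End K g)ˣ) : Module.End K g) := by
      intro s t
      rw [zpow_add, Units.val_mul]
    have hP0 : ((u ^ (0 : ℤ) : (Module.End K g)ˣ) : Module.End K g) = 1 := by
      rw [zpow_zero, Units.val_one]
    have hd : ((u ^ (1 : ℤ) : (Module.End K g)ˣ) : Module.End K g) = (u : Module.End K g) := by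
      rw [zpow_one]
    have hbase : ∀ y, phiSum b
        (fun s : ℤ => ((u ^ s : (Module.End K g)ˣ) : Module.End K g)) (fun _ => (1 : ℤ)) y = 0 :=
      fun y => phi_base b (u : Module.End K g) hN
        (fun s : ℤ => ((u ^ s : (Module.End K g)ˣ) : Module.End K g)) hP hP0 1 hd y
    have hzero := phi_int b (u : Module.End K g) u rfl hbase
      (∑ i, (1 - α i).toNat) α rfl x
    exact (conv b hb.1 (fun s : ℤ => ((u ^ s : (Module.End K g)ˣ) : Module.End K g)) α x).trans
      hzero
end

section
/- Let (g, ·) be a commutative associative algebra over a field K, let D₁, D₂ : g → g be commuting derivations (D₁∘D₂ = D₂∘D₁), and equip g with the 3-Lie bracket ⟦x,y,z⟧ given by the 3×3 determinant (expanded with the multiplication of g) of the matrix with rows (x, y, z), (D₁x, D₁y, D₁z), (D₂x, D₂y, D₂z). If N : g → g is a Nijenhuis operator on the associative algebra (g, ·) satisfying N∘D₁ = D₁∘N and N∘D₂ = D₂∘N, then N is a Nijenhuis operator on the 3-Lie algebra (g, ⟦·,·,·⟧), i.e. ⟦Nx, Ny, Nz⟧ = N(⟦x,y,z⟧_N²)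 for all x, y, z ∈ g. -/
private lemma det2Bracket_explicit {K : Type*} [Field K] {A : Type*} [NonUnitalCommRing A]
    [Module K A] (D₁ D₂ : A →ₗ[K] A) (x y z : A) :
    (∑ σ : Equiv.Perm (Fin 3),
      (Equiv.Perm.sign σ : ℤ) •
        ((![x, y, z]) (σ 0) * (D₁ ((![x, y, z]) (σ 1)) * D₂ ((![x, y, z]) (σ 2)))))
      = x * (D₁ y * D₂ z) - x * (D₁ z * D₂ y) - y * (D₁ x * D₂ z)
        + y * (D₁ z * D₂ x) + z * (D₁ x * D₂ y) - z * (D₁ y * D₂ x) := by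
  rw [show (Finset.univ : Finset (Equiv.Perm (Fin 3)))
      = {1, Equiv.swap 0 1, Equiv.swap 0 2, Equiv.swap 1 2,
         Equiv.swap 0 1 * Equiv.swap 1 2, Equiv.swap 0 2 * Equiv.swap 1 2} from by decide]
  simp (config := { decide := true }) [Finset.sum_insert, Finset.mem_insert,
    Equiv.swap_apply_def, Equiv.Perm.sign_swap]
  abel

private lemma nijenhuis_triple {K : Type*} [Field K] {A : Type*} [NonUnitalCommRing A]
    [Module K A] (N : A →ₗ[K] A)
    (hN : ∀ x y : A, N x * N y = N (N x * y + x * N y - N (x * y))) (a b c : A) :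
    N a * (N b * N c)
      = N (N a * (N b * c) + N a * (b * N c) + a * (N b * N c)
          - N (N a * (b * c) + a * (N b * c) + a * (b * N c) - N (a * (b * c)))) := by
  have h1 := hN b c
  have h2 := hN a (b * c)
  calc N a * (N b * N c)
      = N a * N (N b * c + b * N c - N (b * c)) := by rw [h1]
    _ = N (N a * (N b * c + b * N c - N (b * c))
          + a * N (N b * c + b * N c - N (b * c))
          - N (a * (N b * c + b * N c - N (b * c)))) := hN a _
    _ = _ := by
        rw [← h1]
        congr 1
        simp only [mul_add, mul_sub]
        rw [h2]
        simp only [map_add, map_sub]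
        abel


/-- `br` is a 3-Lie algebra bracket over `K`: trilinear, alternating (skew-symmetric)
and satisfying the Filippov identity. -/
def Is3LieBracket (K : Type*) [Field K] {A : Type*} [AddCommGroup A] [Module K A]
    (br : A → A → A → A) : Prop :=
  (∀ x₁ x₂ y z, br (x₁ + x₂) y z = br x₁ y z + br x₂ y z) ∧
  (∀ (c : K) (x y z : A), br (c • x) y z = c • br x y z) ∧
  (∀ x y₁ y₂ z, br x (y₁ + y₂) z = br x y₁ z + br x y₂ z) ∧
  (∀ (c : K) (x y z : A), br x (c • y) z = c • br x y z) ∧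
  (∀ x y z₁ z₂, br x y (z₁ + z₂) = br x y z₁ + br x y z₂) ∧
  (∀ (c : K) (x y z : A), br x y (c • z) = c • br x y z) ∧
  (∀ x y, br x x y = 0) ∧ (∀ x y, br x y y = 0) ∧ (∀ x y, br x y x = 0) ∧
  (∀ x y a b c, br x y (br a b c) = br (br x y a) b c + br a (br x y b) c + br a b (br x y c))

/-- `N` is a Nijenhuis operator on the 3-Lie algebra `(A, br)`:
`[Nx,Ny,Nz] = N([x,y,z]_N²)` where
`[x,y,z]_N¹ = [Nx,y,z] + [x,Ny,z] + [x,y,Nz] − N[x,y,z]` and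
`[x,y,z]_N² = [Nx,Ny,z] + [Nx,y,Nz] + [x,Ny,Nz] − N([x,y,z]_N¹)`. -/
def IsNijenhuis3 (K : Type*) [Field K] {A : Type*} [AddCommGroup A] [Module K A]
    (br : A → A → A → A) (N : A →ₗ[K] A) : Prop :=
  ∀ x y z : A,
    br (N x) (N y) (N z)
      = N (br (N x) (N y) z + br (N x) y (N z) + br x (N y) (N z)
          - N (br (N x) y z + br x (N y) z + br x y (N z) - N (br x y z)))

/-- The 3×3 determinant bracket with rows `(x,y,z)`, `(D₁x,D₁y,D₁z)`, `(D₂x,D₂y,D₂z)`,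
expanded with the multiplication of `A`. -/
def det2Bracket {K : Type*} [Field K] {A : Type*} [NonUnitalCommRing A] [Module K A]
    (D₁ D₂ : A →ₗ[K] A) (x y z : A) : A :=
  ∑ σ : Equiv.Perm (Fin 3),
    (Equiv.Perm.sign σ : ℤ) •
      ((![x, y, z]) (σ 0) * (D₁ ((![x, y, z]) (σ 1)) * D₂ ((![x, y, z]) (σ 2))))

/-- Let `D₁, D₂` be commuting derivations of a commutative
associative algebra `(A, *)` over `K` and equip `A` with the determinant 3-Lie
bracket.  If `N` is a Nijenhuis operator on `(A, *)` commuting with `D₁` and `D₂`,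
then `N` is a Nijenhuis operator on this 3-Lie algebra. -/
theorem nijenhuis_on_two_derivations_threeLie
    {K : Type*} [Field K] {A : Type*} [NonUnitalCommRing A] [Module K A]
    [SMulCommClass K A A] [IsScalarTower K A A]
    (D₁ D₂ : A →ₗ[K] A)
    (hD₁ : ∀ x y : A, D₁ (x * y) = D₁ x * y + x * D₁ y)
    (hD₂ : ∀ x y : A, D₂ (x * y) = D₂ x * y + x * D₂ y)
    (hcomm : ∀ x : A, D₁ (D₂ x) = D₂ (D₁ x))
    (N : A →ₗ[K] A)
    (hN : ∀ x y : A, N x * N y = N (N x * y + x * N y - N (x * y)))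
    (hND₁ : ∀ x : A, N (D₁ x) = D₁ (N x))
    (hND₂ : ∀ x : A, N (D₂ x) = D₂ (N x)) :
    IsNijenhuis3 K (det2Bracket D₁ D₂) N := by
  intro x y z
  simp only [det2Bracket, det2Bracket_explicit, ← hND₁, ← hND₂]
  simp only [nijenhuis_triple N hN]
  simp only [map_add, map_sub]
  abel
end
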